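/- Let E be a finite-dimensional real inner product space, B a convex subset of E contained in a polyhedron ∩_{i=1}^k {x ∈ E : ⟨y_i, x⟩ ≤ b_i}, where y_i ∈ E and b_i ∈ ℝ. If x₁, x₂ belong to the relative interior of B, then for every i ∈ {1,...,k}, ⟨y_i, x₁⟩ = b_i if and only if ⟨y_i, x₂⟩ = b_i. -/
import Mathlib

open InnerProductSpace

lemma beyond_point {E : Type*} [NormedAddCommGroup E] [InnerProductSpace ℝ E]
    {B : Set E} {x₁ x₂ : E} (h₁ : x₁ ∈ intrinsicInterior ℝ B) (h₂ : x₂ ∈ B) :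
    ∃ t : ℝ, 1 < t ∧ x₂ + t • (x₁ - x₂) ∈ B := by
  obtain ⟨p, hp, hpx⟩ := mem_intrinsicInterior.1 h₁
  have hx₂span : x₂ ∈ affineSpan ℝ B := subset_affineSpan ℝ B h₂
  have hmem : ∀ t : ℝ, x₂ + t • (x₁ - x₂) ∈ affineSpan ℝ B := by
    intro t
    have := AffineSubspace.smul_vsub_vadd_mem (affineSpan ℝ B) t p.2 hx₂span hx₂span
    rw [hpx] at this
    simpa [vsub_eq_sub, vadd_eq_add, add_comm] using this
  set f : ℝ → affineSpan ℝ B := fun t => ⟨x₂ + t • (x₁ - x₂), hmem t⟩ with hf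
  have hcont : Continuous f := by
    apply Continuous.subtype_mk
    fun_prop
  have hopen : IsOpen (f ⁻¹' interior ((↑) ⁻¹' B : Set (affineSpan ℝ B))) :=
    isOpen_interior.preimage hcont
  have h1mem : (1 : ℝ) ∈ f ⁻¹' interior ((↑) ⁻¹' B : Set (affineSpan ℝ B)) := by
    have : f 1 = p := by
      apply Subtype.ext
      simp [hf, hpx]
    simpa [this] using hp
  obtain ⟨ε, hε, hball⟩ := Metric.isOpen_iff.1 hopen 1 h1mem
  refine ⟨1 + ε / 2, by linarith, ?_⟩
  have : (1 + ε / 2 : ℝ) ∈ Metric.ball (1 : ℝ) ε := by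
    rw [Metric.mem_ball, Real.dist_eq, show (1 + ε/2) - 1 = ε/2 by ring, abs_of_nonneg (by linarith)]
    linarith
  have := interior_subset (hball this)
  exact this

lemma one_dir {E : Type*} [NormedAddCommGroup E] [InnerProductSpace ℝ E]
    {k : ℕ} (y : Fin k → E) (b : Fin k → ℝ)
    {B : Set E}
    (hsub : B ⊆ ⋂ i : Fin k, {x : E | ⟪y i, x⟫_ℝ ≤ b i})
    {x₁ x₂ : E} (h₁ : x₁ ∈ intrinsicInterior ℝ B) (h₂ : x₂ ∈ intrinsicInterior ℝ B)
    (i : Fin k) (he : ⟪y i, x₁⟫_ℝ = b i) : ⟪y i, x₂⟫_ℝ = b i := by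
  have hx₂B := intrinsicInterior_subset h₂
  obtain ⟨t, ht, hmem⟩ := beyond_point h₁ hx₂B
  have hle : ∀ x ∈ B, ⟪y i, x⟫_ℝ ≤ b i := fun x hx => by
    have := hsub hx; simp only [Set.mem_iInter] at this; exact this i
  have h2le := hle x₂ hx₂B
  by_contra hne
  have h2lt : ⟪y i, x₂⟫_ℝ < b i := lt_of_le_of_ne h2le hne
  have h3 := hle _ hmem
  rw [inner_add_right, inner_smul_right, inner_sub_right, he] at h3
  nlinarith

theorem stmt_0 {E : Type*} [NormedAddCommGroup E] [InnerProductSpace ℝ E]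
    [FiniteDimensional ℝ E] {k : ℕ} (y : Fin k → E) (b : Fin k → ℝ)
    (B : Set E) (hB : Convex ℝ B)
    (hsub : B ⊆ ⋂ i : Fin k, {x : E | ⟪y i, x⟫_ℝ ≤ b i})
    {x₁ x₂ : E} (h₁ : x₁ ∈ intrinsicInterior ℝ B) (h₂ : x₂ ∈ intrinsicInterior ℝ B)
    (i : Fin k) : ⟪y i, x₁⟫_ℝ = b i ↔ ⟪y i, x₂⟫_ℝ = b i :=
  ⟨one_dir y b hsub h₁ h₂ i, one_dir y b hsub h₂ h₁ i⟩
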